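/- There exists a constant C, depending only on c_φ, C_φ, τ, M and ∫x²φ(x)dx, such that for every n ≥ 1, every σ > 0 and every θ₀ ∈ ℝ with |θ₀| ≤ Mσ, the expectation over ε ~ N(0,1) of the posterior second moment satisfies E[B_{n,σ,θ₀}(ε)] ≤ C·min(σ², 1/n). -/

import Mathlib

open MeasureTheory ProbabilityTheory

/-- Denominator integral `D_{n,σ,θ₀}(ε)`. -/
noncomputable def Dint (φ : ℝ → ℝ) (n : ℕ) (σ θ₀ ε : ℝ) : ℝ :=
  ∫ v : ℝ, Real.exp (-v ^ 2 / 2 + ε * v) *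
    ((Real.sqrt n * σ)⁻¹ * φ ((θ₀ + v / Real.sqrt n) / σ))

/-- Numerator integral `N_{n,σ,θ₀}(ε)`. -/
noncomputable def Nint (φ : ℝ → ℝ) (n : ℕ) (σ θ₀ ε : ℝ) : ℝ :=
  ∫ v : ℝ, v ^ 2 * Real.exp (-v ^ 2 / 2 + ε * v) *
    ((Real.sqrt n * σ)⁻¹ * φ ((θ₀ + v / Real.sqrt n) / σ))

/-- Posterior second moment `B_{n,σ,θ₀}(ε) = N/(n·D)`. -/
noncomputable def Bpost (φ : ℝ → ℝ) (n : ℕ) (σ θ₀ ε : ℝ) : ℝ :=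
  Nint φ n σ θ₀ ε / (n * Dint φ n σ θ₀ ε)


lemma two_mul_le_exp {y : ℝ} (hy : 0 ≤ y) : 2*y ≤ Real.exp y := by
  have h := Real.add_one_le_exp (y/2)
  have h2 : Real.exp (y/2) * Real.exp (y/2) = Real.exp y := by
    rw [← Real.exp_add]; ring_nf
  nlinarith [Real.exp_pos (y/2), sq_nonneg (y/2 - 1)]

lemma aux_ptA (ε v : ℝ) : v^2 * Real.exp (-(v-ε)^2/2) ≤ (4+2*ε^2) * Real.exp (-(v-ε)^2/4) := by
  have h1 : Real.exp (-(v-ε)^2/2) = Real.exp (-(v-ε)^2/4) * Real.exp (-(v-ε)^2/4) := by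
    rw [← Real.exp_add]; ring_nf
  set a := Real.exp (-(v-ε)^2/4) with ha
  have he0 : 0 < a := Real.exp_pos _
  have he1 : a ≤ 1 := by rw [ha, Real.exp_le_one_iff]; nlinarith [sq_nonneg (v-ε)]
  have h2 : (v-ε)^2 * a ≤ 2 := by
    have h3 := two_mul_le_exp (y := (v-ε)^2/4) (by positivity)
    have h4 : a = (Real.exp ((v-ε)^2/4))⁻¹ := by
      rw [ha, ← Real.exp_neg]; ring_nf
    rw [h4]
    have h5 := Real.exp_pos ((v-ε)^2/4)
    rw [mul_inv_le_iff₀ h5]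
    nlinarith
  have hv : v^2 ≤ 2*(v-ε)^2 + 2*ε^2 := by nlinarith [sq_nonneg (v - 2*ε)]
  have e1 : v^2*(a*a) ≤ (2*(v-ε)^2+2*ε^2)*(a*a) :=
    mul_le_mul_of_nonneg_right hv (by positivity)
  have e3 : ((v-ε)^2*a)*(2*a) ≤ 2*(2*a) :=
    mul_le_mul_of_nonneg_right h2 (by positivity)
  have e4 : (2*ε^2*a)*a ≤ (2*ε^2*a)*1 :=
    mul_le_mul_of_nonneg_left he1 (by positivity)
  rw [h1]
  nlinarith

lemma aux_ptB (x : ℝ) : (4+2*x^2) * Real.exp (-x^2/2) ≤ 6 * Real.exp (-x^2/4) := by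
  have h1 : Real.exp (-x^2/2) = Real.exp (-x^2/4) * Real.exp (-x^2/4) := by
    rw [← Real.exp_add]; ring_nf
  have h2 : (4 + 2*x^2) * Real.exp (-x^2/4) ≤ 6 := by
    have h3 := Real.add_one_le_exp (x^2/8)
    have h4 : Real.exp (x^2/8) * Real.exp (x^2/8) = Real.exp (x^2/4) := by
      rw [← Real.exp_add]; ring_nf
    have h5 : Real.exp (-x^2/4) = (Real.exp (x^2/4))⁻¹ := by rw [← Real.exp_neg]; ring_nf
    rw [h5, mul_inv_le_iff₀ (Real.exp_pos _)]
    nlinarith [Real.exp_pos (x^2/8), sq_nonneg (x^2/8 - 1)]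
  have he0 : 0 < Real.exp (-x^2/4) := Real.exp_pos _
  calc (4+2*x^2) * Real.exp (-x^2/2) = ((4+2*x^2) * Real.exp (-x^2/4)) * Real.exp (-x^2/4) := by
        rw [h1]; ring
    _ ≤ 6 * Real.exp (-x^2/4) := mul_le_mul_of_nonneg_right h2 he0.le

lemma aux_ptC {s : ℝ} (hs : 1 ≤ s) : s^3 * Real.exp ((1-s^2)/2) ≤ 3 := by
  have h3 := Real.add_one_le_exp ((s^2-1)/6)
  set E := Real.exp ((s^2-1)/6) with hE
  have hEpos : 0 < E := Real.exp_pos _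
  have h4 : E * E * E = Real.exp ((s^2-1)/2) := by
    rw [hE, ← Real.exp_add, ← Real.exp_add]; ring_nf
  have h5 : (s^2+5)/6 ≤ E := by linarith
  have h6 : 0 ≤ (s^2+5)/6 := by positivity
  have h7 : ((s^2+5)/6)*((s^2+5)/6)*((s^2+5)/6) ≤ E*E*E := by
    have := mul_le_mul (mul_le_mul h5 h5 h6 hEpos.le) h5 h6 (by positivity)
    linarith
  have h8 : 72 * s^3 ≤ (s^2+5)^3 := by
    nlinarith [sq_nonneg (s^2-5), sq_nonneg (s^2 - 6*s + 5), sq_nonneg (s-1), sq_nonneg (s^3 - 6*s), sq_nonneg (s^2-2*s), sq_nonneg s, sq_nonneg (s-5)]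
  have h9 : s^3 ≤ 3 * Real.exp ((s^2-1)/2) := by
    rw [← h4]; nlinarith
  have hinv : Real.exp ((1-s^2)/2) * Real.exp ((s^2-1)/2) = 1 := by
    have hz : (1-s^2)/2 + (s^2-1)/2 = 0 := by ring
    rw [← Real.exp_add, hz, Real.exp_zero]
  nlinarith [Real.exp_pos ((1-s^2)/2), Real.exp_pos ((s^2-1)/2),
    mul_le_mul_of_nonneg_right h9 (Real.exp_pos ((1-s^2)/2)).le]

lemma gauss_integrable (a : ℝ) {b : ℝ} (hb : 0 < b) :
    Integrable (fun v : ℝ => Real.exp (-(v-a)^2/b)) := by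
  have h : (fun v : ℝ => Real.exp (-(v-a)^2/b)) = (fun v => Real.exp (-(1/b)*(v-a)^2)) := by
    funext v; ring_nf
  rw [h]
  exact (integrable_exp_neg_mul_sq (by positivity)).comp_sub_right a

lemma gauss_value (a : ℝ) {b : ℝ} (hb : 0 < b) :
    (∫ v : ℝ, Real.exp (-(v-a)^2/b)) = Real.sqrt (b*Real.pi) := by
  have h0 : (∫ v : ℝ, Real.exp (-(v-a)^2/b)) = ∫ v : ℝ, Real.exp (-v^2/b) := by
    exact integral_sub_right_eq_self (fun x => Real.exp (-x^2/b)) a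
  have h1 : (∫ v : ℝ, Real.exp (-v^2/b)) = ∫ v : ℝ, Real.exp (-(1/b)*v^2) := by
    congr 1; funext v; ring_nf
  rw [h0, h1, integral_gaussian]
  congr 1
  field_simp

noncomputable def gden (φ : ℝ → ℝ) (n : ℕ) (σ θ₀ : ℝ) (v : ℝ) : ℝ :=
  (Real.sqrt n * σ)⁻¹ * φ ((θ₀ + v / Real.sqrt n) / σ)

section Gden

variable {φ : ℝ → ℝ} {cφ Cφ τ M : ℝ} {n : ℕ} {σ θ₀ : ℝ}

lemma phi_integrable (hφ_prob : (∫ x : ℝ, φ x) = 1) : Integrable φ := by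
  by_contra h
  rw [integral_undef h] at hφ_prob; norm_num at hφ_prob

lemma sqrtn_pos (hn : 1 ≤ n) : 0 < Real.sqrt n := by
  have : (0:ℝ) < n := by exact_mod_cast hn
  positivity

lemma s_pos (hn : 1 ≤ n) (hσ : 0 < σ) : 0 < Real.sqrt n * σ :=
  mul_pos (sqrtn_pos hn) hσ

lemma gden_nonneg (hφ_nonneg : ∀ x, 0 ≤ φ x) (hn : 1 ≤ n) (hσ : 0 < σ) (v : ℝ) :
    0 ≤ gden φ n σ θ₀ v := by
  have := s_pos hn hσ
  rw [gden]
  exact mul_nonneg (by positivity) (hφ_nonneg _)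

lemma gden_le (hub : ∀ x, φ x ≤ Cφ) (hn : 1 ≤ n) (hσ : 0 < σ) (v : ℝ) :
    gden φ n σ θ₀ v ≤ (Real.sqrt n * σ)⁻¹ * Cφ := by
  have hs := s_pos hn hσ
  rw [gden]
  exact mul_le_mul_of_nonneg_left (hub _) (by positivity)

lemma gden_meas (hφ_meas : Measurable φ) : Measurable (gden φ n σ θ₀) := by
  apply Measurable.const_mul
  exact hφ_meas.comp ((measurable_const.add (measurable_id.div_const _)).div_const _)

lemma arg_eq (hn : 1 ≤ n) (hσ : 0 < σ) (v : ℝ) :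
    (θ₀ + v / Real.sqrt n) / σ = v / (Real.sqrt n * σ) + θ₀ / σ := by
  have h1 := (sqrtn_pos hn).ne'
  field_simp
  ring

lemma xphi_integrable (hφ_meas : Measurable φ) (hφ_nonneg : ∀ x, 0 ≤ φ x)
    (hφ_prob : (∫ x : ℝ, φ x) = 1) (hmom : Integrable (fun x : ℝ => x ^ 2 * φ x)) :
    Integrable (fun x : ℝ => x * φ x) := by
  apply Integrable.mono' (hmom.add (phi_integrable hφ_prob))
  · exact (measurable_id.mul hφ_meas).aestronglyMeasurable
  · refine Filter.Eventually.of_forall (fun x => ?_)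
    have h1 : |x| ≤ x^2 + 1 := by nlinarith [sq_nonneg (|x| - 1), sq_abs x]
    have : ‖x * φ x‖ = |x| * φ x := by
      rw [norm_mul, Real.norm_eq_abs, Real.norm_eq_abs, abs_of_nonneg (hφ_nonneg x)]
    rw [this, Pi.add_apply]
    nlinarith [hφ_nonneg x, mul_le_mul_of_nonneg_right h1 (hφ_nonneg x)]

lemma gden_moment (hφ_meas : Measurable φ) (hφ_nonneg : ∀ x, 0 ≤ φ x)
    (hφ_prob : (∫ x : ℝ, φ x) = 1) (hmom : Integrable (fun x : ℝ => x ^ 2 * φ x))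
    (hn : 1 ≤ n) (hσ : 0 < σ) (hM : 0 < M) (hθ : |θ₀| ≤ M * σ) :
    Integrable (fun v => v^2 * gden φ n σ θ₀ v) ∧
    (∫ v, v^2 * gden φ n σ θ₀ v) ≤
      2*((∫ x : ℝ, x^2*φ x) + M^2) * ((Real.sqrt n * σ)^2) := by
  have hs := s_pos hn hσ
  set s := Real.sqrt n * σ with hsdef
  set c := θ₀ / σ with hcdef
  have hc : |c| ≤ M := by
    rw [hcdef, abs_div, abs_of_pos hσ, div_le_iff₀ hσ]
    exact hθ
  set ψ : ℝ → ℝ := fun x => (s*(x - c))^2 * φ x with hψdef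
  have hψint : Integrable ψ := by
    have h0 : Integrable (fun x : ℝ =>
        s^2*(x^2*φ x) - (2*s^2*c)*(x*φ x) + (s^2*c^2)*(φ x)) :=
      ((hmom.const_mul _).sub ((xphi_integrable hφ_meas hφ_nonneg hφ_prob hmom).const_mul _)).add
        ((phi_integrable hφ_prob).const_mul _)
    exact h0.congr (Filter.Eventually.of_forall (fun x => by rw [hψdef]; ring))
  have hfun : (fun v => v^2 * gden φ n σ θ₀ v) = (fun v => s⁻¹ * ψ (v/s + c)) := by
    funext v
    have hv : s*(v/s + c - c) = v := by field_simp; ring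
    simp only [gden, hψdef]
    rw [arg_eq hn hσ, hv, ← hsdef, ← hcdef]
    ring
  have hcomp : Integrable (fun v => ψ (v/s + c)) := by
    have h1 : Integrable (fun x => ψ (x + c)) := hψint.comp_add_right c
    exact h1.comp_div hs.ne'
  constructor
  · rw [hfun]; exact hcomp.const_mul _
  · rw [hfun]
    have hval : (∫ v, s⁻¹ * ψ (v/s + c)) = ∫ x, ψ x := by
      rw [integral_const_mul]
      have h2 : (∫ v, ψ (v/s + c)) = |s| • ∫ x, ψ (x + c) :=
        MeasureTheory.Measure.integral_comp_div (fun x => ψ (x + c)) s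
      rw [h2, integral_add_right_eq_self ψ c, abs_of_pos hs, smul_eq_mul]
      field_simp
    rw [hval]
    have hptw : ∀ x, ψ x ≤ 2*s^2*(x^2*φ x) + (2*s^2*M^2)*(φ x) := by
      intro x
      have h1 : (x - c)^2 ≤ 2*x^2 + 2*M^2 := by
        nlinarith [sq_nonneg (x + c), sq_abs c, abs_nonneg c,
          mul_self_le_mul_self (abs_nonneg c) hc]
      have h2 : ψ x = s^2*(x-c)^2 * φ x := by rw [hψdef]; ring
      rw [h2]
      nlinarith [hφ_nonneg x, mul_le_mul_of_nonneg_right h1 (hφ_nonneg x), sq_nonneg s,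
        mul_le_mul_of_nonneg_left (mul_le_mul_of_nonneg_right h1 (hφ_nonneg x)) (sq_nonneg s)]
    have hint2 : Integrable (fun x : ℝ => 2*s^2*(x^2*φ x) + (2*s^2*M^2)*(φ x)) :=
      (hmom.const_mul _).add ((phi_integrable hφ_prob).const_mul _)
    calc (∫ x, ψ x) ≤ ∫ x, (2*s^2*(x^2*φ x) + (2*s^2*M^2)*(φ x)) :=
          integral_mono hψint hint2 hptw
      _ = 2*s^2*(∫ x : ℝ, x^2*φ x) + 2*s^2*M^2*(∫ x : ℝ, φ x) := by
          rw [integral_add (hmom.const_mul _) ((phi_integrable hφ_prob).const_mul _),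
            integral_const_mul, integral_const_mul]
      _ = 2*((∫ x : ℝ, x^2*φ x) + M^2) * s^2 := by rw [hφ_prob]; ring

end Gden

section Main

variable {φ : ℝ → ℝ} {cφ Cφ τ M : ℝ} {n : ℕ} {σ θ₀ : ℝ}

lemma exp_id (ε v : ℝ) :
    Real.exp (-v^2/2 + ε*v) = Real.exp (ε^2/2) * Real.exp (-(v-ε)^2/2) := by
  rw [← Real.exp_add]; congr 1; ring

lemma Dintegrand_int (hφ_meas : Measurable φ) (hφ_nonneg : ∀ x, 0 ≤ φ x)
    (hub : ∀ x, φ x ≤ Cφ) (hn : 1 ≤ n) (hσ : 0 < σ) (ε : ℝ) :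
    Integrable (fun v => Real.exp (-v^2/2 + ε*v) * gden φ n σ θ₀ v) := by
  have hs := s_pos hn hσ
  apply Integrable.mono'
    ((gauss_integrable ε (by norm_num : (0:ℝ) < 2)).const_mul
      ((Real.sqrt n*σ)⁻¹ * Cφ * Real.exp (ε^2/2)))
  · exact ((Real.measurable_exp.comp (by fun_prop)).mul (gden_meas hφ_meas)).aestronglyMeasurable
  · filter_upwards with v
    have h0 := gden_nonneg (θ₀ := θ₀) hφ_nonneg hn hσ v
    have h1 := gden_le (θ₀ := θ₀) hub hn hσ v
    rw [Real.norm_eq_abs, abs_of_nonneg (mul_nonneg (Real.exp_pos _).le h0), exp_id]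
    calc Real.exp (ε^2/2) * Real.exp (-(v-ε)^2/2) * gden φ n σ θ₀ v
        ≤ Real.exp (ε^2/2) * Real.exp (-(v-ε)^2/2) * ((Real.sqrt n*σ)⁻¹ * Cφ) := by
          exact mul_le_mul_of_nonneg_left h1 (by positivity)
      _ = (Real.sqrt n*σ)⁻¹ * Cφ * Real.exp (ε^2/2) * Real.exp (-(v-ε)^2/2) := by ring

lemma Ntilde_int (hφ_meas : Measurable φ) (hφ_nonneg : ∀ x, 0 ≤ φ x)
    (hub : ∀ x, φ x ≤ Cφ) (hn : 1 ≤ n) (hσ : 0 < σ) (ε : ℝ) :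
    Integrable (fun v => v^2 * Real.exp (-(v-ε)^2/2) * gden φ n σ θ₀ v) := by
  have hs := s_pos hn hσ
  apply Integrable.mono'
    ((gauss_integrable ε (by norm_num : (0:ℝ) < 4)).const_mul
      ((Real.sqrt n*σ)⁻¹ * Cφ * (4+2*ε^2)))
  · exact (((measurable_id.pow_const 2).mul
      (Real.measurable_exp.comp (by fun_prop))).mul (gden_meas hφ_meas)).aestronglyMeasurable
  · filter_upwards with v
    have h0 := gden_nonneg (θ₀ := θ₀) hφ_nonneg hn hσ v
    have h1 := gden_le (θ₀ := θ₀) hub hn hσ v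
    have hCφ : 0 ≤ (Real.sqrt n*σ)⁻¹ * Cφ := le_trans h0 h1
    rw [Real.norm_eq_abs, abs_of_nonneg (by positivity)]
    calc v^2 * Real.exp (-(v-ε)^2/2) * gden φ n σ θ₀ v
        ≤ v^2 * Real.exp (-(v-ε)^2/2) * ((Real.sqrt n*σ)⁻¹ * Cφ) := by
          exact mul_le_mul_of_nonneg_left h1 (by positivity)
      _ ≤ ((4+2*ε^2) * Real.exp (-(v-ε)^2/4)) * ((Real.sqrt n*σ)⁻¹ * Cφ) := by
          exact mul_le_mul_of_nonneg_right (aux_ptA ε v) hCφ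
      _ = (Real.sqrt n*σ)⁻¹ * Cφ * (4+2*ε^2) * Real.exp (-(v-ε)^2/4) := by ring

lemma Nintegrand_int (hφ_meas : Measurable φ) (hφ_nonneg : ∀ x, 0 ≤ φ x)
    (hub : ∀ x, φ x ≤ Cφ) (hn : 1 ≤ n) (hσ : 0 < σ) (ε : ℝ) :
    Integrable (fun v => v^2 * Real.exp (-v^2/2 + ε*v) * gden φ n σ θ₀ v) := by
  have h := (Ntilde_int (θ₀ := θ₀) hφ_meas hφ_nonneg hub hn hσ ε).const_mul (Real.exp (ε^2/2))
  apply h.congr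
  filter_upwards with v
  rw [exp_id]; ring

lemma Nint_eq (ε : ℝ) : Nint φ n σ θ₀ ε =
    Real.exp (ε^2/2) * ∫ v, v^2 * Real.exp (-(v-ε)^2/2) * gden φ n σ θ₀ v := by
  rw [Nint, ← integral_const_mul]
  congr 1; funext v
  simp only [gden]
  rw [exp_id]; ring

lemma Dlb (hφ_meas : Measurable φ) (hφ_nonneg : ∀ x, 0 ≤ φ x) (hub : ∀ x, φ x ≤ Cφ)
    (hlb : ∀ x ∈ Set.Ioo (-τ) τ, cφ ≤ φ x) (hc : 0 < cφ) (hτ : M + 1 ≤ τ)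
    (hn : 1 ≤ n) (hσ : 0 < σ) (hθ : |θ₀| ≤ M * σ) (ε a b r : ℝ) (hab : a < b)
    (hbnd : ∀ v ∈ Set.Ioo a b, |v| < Real.sqrt n * σ)
    (hr : ∀ v ∈ Set.Ioo a b, r ≤ -v^2/2 + ε*v) :
    (b - a) * (Real.exp r * (cφ * (Real.sqrt n * σ)⁻¹)) ≤ Dint φ n σ θ₀ ε := by
  have hs := s_pos hn hσ
  have hint := Dintegrand_int (θ₀ := θ₀) hφ_meas hφ_nonneg hub hn hσ ε
  have hD : Dint φ n σ θ₀ ε = ∫ v, Real.exp (-v^2/2+ε*v) * gden φ n σ θ₀ v := rfl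
  rw [hD]
  have step1 : (∫ v in Set.Ioo a b, Real.exp (-v^2/2+ε*v) * gden φ n σ θ₀ v)
      ≤ ∫ v, Real.exp (-v^2/2+ε*v) * gden φ n σ θ₀ v := by
    apply setIntegral_le_integral hint
    filter_upwards with v
    exact mul_nonneg (Real.exp_pos _).le (gden_nonneg hφ_nonneg hn hσ v)
  refine le_trans ?_ step1
  have hptw : ∀ v ∈ Set.Ioo a b,
      Real.exp r * (cφ * (Real.sqrt n * σ)⁻¹) ≤ Real.exp (-v^2/2+ε*v) * gden φ n σ θ₀ v := by
    intro v hv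
    have harg : |(θ₀ + v / Real.sqrt n) / σ| < τ := by
      rw [arg_eq hn hσ]
      have e1 : |v / (Real.sqrt n*σ) + θ₀/σ| ≤ |v|/(Real.sqrt n*σ) + |θ₀|/σ := by
        refine (abs_add_le _ _).trans ?_
        rw [abs_div, abs_div, abs_of_pos hs, abs_of_pos hσ]
      have e2 : |v|/(Real.sqrt n*σ) < 1 := (div_lt_one hs).mpr (hbnd v hv)
      have e3 : |θ₀|/σ ≤ M := (div_le_iff₀ hσ).mpr hθ
      calc |v / (Real.sqrt n*σ) + θ₀/σ| ≤ |v|/(Real.sqrt n*σ) + |θ₀|/σ := e1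
        _ < 1 + M := by linarith
        _ ≤ τ := by linarith
    have hmem : (θ₀ + v / Real.sqrt n) / σ ∈ Set.Ioo (-τ) τ := by
      have := abs_lt.mp harg
      exact ⟨this.1, this.2⟩
    have hφlb : cφ ≤ φ ((θ₀ + v / Real.sqrt n) / σ) := hlb _ hmem
    have hg : cφ * (Real.sqrt n * σ)⁻¹ ≤ gden φ n σ θ₀ v := by
      rw [gden, mul_comm]
      exact mul_le_mul_of_nonneg_left hφlb (by positivity)
    exact mul_le_mul (Real.exp_le_exp.mpr (hr v hv)) hg
      (by positivity) (Real.exp_pos _).le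
  have const_int : IntegrableOn (fun _ : ℝ => Real.exp r * (cφ * (Real.sqrt n * σ)⁻¹))
      (Set.Ioo a b) := integrableOn_const measure_Ioo_lt_top.ne
  have step2 := setIntegral_mono_on const_int hint.integrableOn measurableSet_Ioo hptw
  rw [setIntegral_const] at step2
  calc (b - a) * (Real.exp r * (cφ * (Real.sqrt n * σ)⁻¹))
      = (volume (Set.Ioo a b)).toReal • (Real.exp r * (cφ * (Real.sqrt n * σ)⁻¹)) := by
        rw [Real.volume_Ioo, ENNReal.toReal_ofReal (by linarith), smul_eq_mul]
    _ ≤ _ := step2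

end Main

section Main2

variable {φ : ℝ → ℝ} {cφ Cφ τ M : ℝ} {n : ℕ} {σ θ₀ : ℝ}

lemma Nint_nonneg (hφ_nonneg : ∀ x, 0 ≤ φ x) (hn : 1 ≤ n) (hσ : 0 < σ) (ε : ℝ) :
    0 ≤ Nint φ n σ θ₀ ε := by
  have hs := s_pos hn hσ
  apply integral_nonneg
  intro v
  have := hφ_nonneg ((θ₀ + v / Real.sqrt n) / σ)
  positivity

lemma Ntilde_nonneg (hφ_nonneg : ∀ x, 0 ≤ φ x) (hn : 1 ≤ n) (hσ : 0 < σ) (ε : ℝ) :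
    0 ≤ ∫ v, v^2 * Real.exp (-(v-ε)^2/2) * gden φ n σ θ₀ v := by
  apply integral_nonneg
  intro v
  exact mul_nonneg (by positivity) (gden_nonneg hφ_nonneg hn hσ v)

lemma Ntilde_ub (hφ_meas : Measurable φ) (hφ_nonneg : ∀ x, 0 ≤ φ x)
    (hub : ∀ x, φ x ≤ Cφ) (hn : 1 ≤ n) (hσ : 0 < σ) (ε : ℝ) :
    (∫ v, v^2 * Real.exp (-(v-ε)^2/2) * gden φ n σ θ₀ v)
      ≤ (Real.sqrt n*σ)⁻¹ * Cφ * ((4+2*ε^2) * Real.sqrt (4*Real.pi)) := by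
  have hs := s_pos hn hσ
  have hCφ : 0 ≤ (Real.sqrt n*σ)⁻¹ * Cφ :=
    le_trans (gden_nonneg (θ₀ := θ₀) hφ_nonneg hn hσ 0) (gden_le hub hn hσ 0)
  have hmaj : Integrable (fun v => ((Real.sqrt n*σ)⁻¹ * Cφ * (4+2*ε^2)) *
      Real.exp (-(v-ε)^2/4)) :=
    (gauss_integrable ε (by norm_num : (0:ℝ) < 4)).const_mul _
  have h1 : (∫ v, v^2 * Real.exp (-(v-ε)^2/2) * gden φ n σ θ₀ v)
      ≤ ∫ v, ((Real.sqrt n*σ)⁻¹ * Cφ * (4+2*ε^2)) * Real.exp (-(v-ε)^2/4) := by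
    apply integral_mono (Ntilde_int hφ_meas hφ_nonneg hub hn hσ ε) hmaj
    intro v
    calc v^2 * Real.exp (-(v-ε)^2/2) * gden φ n σ θ₀ v
        ≤ v^2 * Real.exp (-(v-ε)^2/2) * ((Real.sqrt n*σ)⁻¹ * Cφ) :=
          mul_le_mul_of_nonneg_left (gden_le hub hn hσ v) (by positivity)
      _ ≤ ((4+2*ε^2) * Real.exp (-(v-ε)^2/4)) * ((Real.sqrt n*σ)⁻¹ * Cφ) :=
          mul_le_mul_of_nonneg_right (aux_ptA ε v) hCφ
      _ = ((Real.sqrt n*σ)⁻¹ * Cφ * (4+2*ε^2)) * Real.exp (-(v-ε)^2/4) := by ring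
  rw [integral_const_mul, gauss_value ε (by norm_num : (0:ℝ) < 4)] at h1
  calc (∫ v, v^2 * Real.exp (-(v-ε)^2/2) * gden φ n σ θ₀ v)
      ≤ (Real.sqrt n*σ)⁻¹ * Cφ * (4+2*ε^2) * Real.sqrt (4*Real.pi) := h1
    _ = (Real.sqrt n*σ)⁻¹ * Cφ * ((4+2*ε^2) * Real.sqrt (4*Real.pi)) := by ring

lemma Dpos_small (hφ_meas : Measurable φ) (hφ_nonneg : ∀ x, 0 ≤ φ x) (hub : ∀ x, φ x ≤ Cφ)
    (hlb : ∀ x ∈ Set.Ioo (-τ) τ, cφ ≤ φ x) (hc : 0 < cφ) (hτ : M + 1 ≤ τ)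
    (hn : 1 ≤ n) (hσ : 0 < σ) (hθ : |θ₀| ≤ M * σ) (hs1 : Real.sqrt n * σ ≤ 1) (ε : ℝ) :
    Real.exp (-(1:ℝ)/2) * cφ ≤ Dint φ n σ θ₀ ε := by
  have hs := s_pos hn hσ
  set s := Real.sqrt n * σ with hsdef
  have key : ∀ a b : ℝ, a < b → b - a = s →
      (∀ v ∈ Set.Ioo a b, |v| < s) → (∀ v ∈ Set.Ioo a b, -(1:ℝ)/2 ≤ -v^2/2 + ε*v) →
      Real.exp (-(1:ℝ)/2) * cφ ≤ Dint φ n σ θ₀ ε := by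
    intro a b hab hba hbnd hr
    have h := Dlb hφ_meas hφ_nonneg hub hlb hc hτ hn hσ hθ ε a b (-(1:ℝ)/2) hab hbnd hr
    rw [hba] at h
    calc Real.exp (-(1:ℝ)/2) * cφ = s * (Real.exp (-(1:ℝ)/2) * (cφ * s⁻¹)) := by
          field_simp
      _ ≤ Dint φ n σ θ₀ ε := h
  rcases le_or_gt 0 ε with hε | hε
  · refine key 0 s hs (by ring) (fun v hv => ?_) (fun v hv => ?_)
    · rw [abs_of_pos hv.1]; exact hv.2
    · obtain ⟨h1, h2⟩ := hv
      have : v ≤ 1 := le_trans h2.le hs1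
      nlinarith [mul_nonneg hε h1.le]
  · refine key (-s) 0 (by linarith) (by ring) (fun v hv => ?_) (fun v hv => ?_)
    · rw [abs_of_neg hv.2]; linarith [hv.1]
    · obtain ⟨h1, h2⟩ := hv
      have : -1 ≤ v := by linarith
      nlinarith [mul_pos_of_neg_of_neg hε h2]

lemma Dpos_inner (hφ_meas : Measurable φ) (hφ_nonneg : ∀ x, 0 ≤ φ x) (hub : ∀ x, φ x ≤ Cφ)
    (hlb : ∀ x ∈ Set.Ioo (-τ) τ, cφ ≤ φ x) (hc : 0 < cφ) (hτ : M + 1 ≤ τ)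
    (hn : 1 ≤ n) (hσ : 0 < σ) (hθ : |θ₀| ≤ M * σ) (hs1 : 1 ≤ Real.sqrt n * σ)
    {ε : ℝ} (hεs : |ε| ≤ Real.sqrt n * σ) :
    Real.exp ((ε^2-1)/2) * (cφ * (Real.sqrt n * σ)⁻¹) ≤ Dint φ n σ θ₀ ε := by
  have hs := s_pos hn hσ
  set s := Real.sqrt n * σ with hsdef
  have habs := abs_le.mp hεs
  have key : ∀ a b : ℝ, a < b → b - a = 1 →
      (∀ v ∈ Set.Ioo a b, |v| < s) → (∀ v ∈ Set.Ioo a b, (ε^2-1)/2 ≤ -v^2/2 + ε*v) →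
      Real.exp ((ε^2-1)/2) * (cφ * s⁻¹) ≤ Dint φ n σ θ₀ ε := by
    intro a b hab hba hbnd hr
    have h := Dlb hφ_meas hφ_nonneg hub hlb hc hτ hn hσ hθ ε a b ((ε^2-1)/2) hab hbnd hr
    rw [hba, one_mul] at h
    exact h
  rcases le_or_gt 0 ε with hε | hε
  · refine key (ε-1) ε (by linarith) (by ring) (fun v hv => ?_) (fun v hv => ?_)
    · rw [abs_lt]; constructor <;> [linarith [hv.1]; linarith [hv.2, habs.2]]
    · obtain ⟨h1, h2⟩ := hv; nlinarith
  · refine key ε (ε+1) (by linarith) (by ring) (fun v hv => ?_) (fun v hv => ?_)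
    · rw [abs_lt]; constructor <;> [linarith [hv.1, habs.1]; linarith [hv.2]]
    · obtain ⟨h1, h2⟩ := hv; nlinarith

lemma Dpos_outer (hφ_meas : Measurable φ) (hφ_nonneg : ∀ x, 0 ≤ φ x) (hub : ∀ x, φ x ≤ Cφ)
    (hlb : ∀ x ∈ Set.Ioo (-τ) τ, cφ ≤ φ x) (hc : 0 < cφ) (hτ : M + 1 ≤ τ)
    (hn : 1 ≤ n) (hσ : 0 < σ) (hθ : |θ₀| ≤ M * σ) (hs1 : 1 ≤ Real.sqrt n * σ)
    {ε : ℝ} (hεs : Real.sqrt n * σ ≤ |ε|) :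
    Real.exp (ε^2/2 - (|ε| - Real.sqrt n * σ + 1)^2/2) * (cφ * (Real.sqrt n * σ)⁻¹)
      ≤ Dint φ n σ θ₀ ε := by
  have hs := s_pos hn hσ
  set s := Real.sqrt n * σ with hsdef
  have key : ∀ a b : ℝ, a < b → b - a = 1 →
      (∀ v ∈ Set.Ioo a b, |v| < s) →
      (∀ v ∈ Set.Ioo a b, ε^2/2 - (|ε| - s + 1)^2/2 ≤ -v^2/2 + ε*v) →
      Real.exp (ε^2/2 - (|ε| - s + 1)^2/2) * (cφ * s⁻¹) ≤ Dint φ n σ θ₀ ε := by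
    intro a b hab hba hbnd hr
    have h := Dlb hφ_meas hφ_nonneg hub hlb hc hτ hn hσ hθ ε a b (ε^2/2 - (|ε| - s + 1)^2/2)
      hab hbnd hr
    rw [hba, one_mul] at h
    exact h
  rcases le_or_gt 0 ε with hε | hε
  · have hεabs : |ε| = ε := abs_of_nonneg hε
    have hsε : s ≤ ε := by rw [hεabs] at hεs; exact hεs
    refine key (s-1) s (by linarith) (by ring) (fun v hv => ?_) (fun v hv => ?_)
    · rw [abs_lt]; exact ⟨by linarith [hv.1], hv.2⟩
    · obtain ⟨h1, h2⟩ := hv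
      rw [hεabs]
      nlinarith
  · have hεabs : |ε| = -ε := abs_of_neg hε
    have hsε : ε ≤ -s := by rw [hεabs] at hεs; linarith
    refine key (-s) (-s+1) (by linarith) (by ring) (fun v hv => ?_) (fun v hv => ?_)
    · rw [abs_lt]; exact ⟨hv.1, by linarith [hv.2]⟩
    · obtain ⟨h1, h2⟩ := hv
      rw [hεabs]
      nlinarith

lemma Dint_pos (hφ_meas : Measurable φ) (hφ_nonneg : ∀ x, 0 ≤ φ x) (hub : ∀ x, φ x ≤ Cφ)
    (hlb : ∀ x ∈ Set.Ioo (-τ) τ, cφ ≤ φ x) (hc : 0 < cφ) (hτ : M + 1 ≤ τ)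
    (hn : 1 ≤ n) (hσ : 0 < σ) (hθ : |θ₀| ≤ M * σ) (ε : ℝ) :
    0 < Dint φ n σ θ₀ ε := by
  have hs := s_pos hn hσ
  rcases le_or_gt (Real.sqrt n * σ) 1 with hs1 | hs1
  · exact lt_of_lt_of_le (by positivity)
      (Dpos_small hφ_meas hφ_nonneg hub hlb hc hτ hn hσ hθ hs1 ε)
  · rcases le_or_gt (|ε|) (Real.sqrt n * σ) with hεs | hεs
    · exact lt_of_lt_of_le (by positivity)
        (Dpos_inner hφ_meas hφ_nonneg hub hlb hc hτ hn hσ hθ hs1.le hεs)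
    · exact lt_of_lt_of_le (by positivity)
        (Dpos_outer hφ_meas hφ_nonneg hub hlb hc hτ hn hσ hθ hs1.le hεs.le)

end Main2

section Fubini

variable {φ : ℝ → ℝ} {cφ Cφ τ M : ℝ} {n : ℕ} {σ θ₀ : ℝ}

lemma Ntilde_fubini (hφ_meas : Measurable φ) (hφ_nonneg : ∀ x, 0 ≤ φ x)
    (hφ_prob : (∫ x : ℝ, φ x) = 1) (hmom : Integrable (fun x : ℝ => x ^ 2 * φ x))
    (hub : ∀ x, φ x ≤ Cφ)
    (hn : 1 ≤ n) (hσ : 0 < σ) (hM : 0 < M) (hθ : |θ₀| ≤ M * σ) :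
    Integrable (fun ε => ∫ v, v^2 * Real.exp (-(v-ε)^2/2) * gden φ n σ θ₀ v) ∧
    (∫ ε, ∫ v, v^2 * Real.exp (-(v-ε)^2/2) * gden φ n σ θ₀ v) ≤
      Real.sqrt (2*Real.pi) * (2*((∫ x : ℝ, x^2*φ x) + M^2) * ((Real.sqrt n * σ)^2)) := by
  have hs := s_pos hn hσ
  obtain ⟨hQint, hQbd⟩ := gden_moment hφ_meas hφ_nonneg hφ_prob hmom hn hσ hM hθ
  set G : ℝ × ℝ → ℝ := fun p => p.1^2 * Real.exp (-(p.1-p.2)^2/2) * gden φ n σ θ₀ p.1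
    with hGdef
  have hGmeas : AEStronglyMeasurable G ((volume : Measure ℝ).prod volume) := by
    apply Measurable.aestronglyMeasurable
    apply Measurable.mul
    · apply Measurable.mul
      · fun_prop
      · exact Real.measurable_exp.comp (by fun_prop)
    · exact (gden_meas hφ_meas).comp measurable_fst
  have hG1 : ∀ v : ℝ, Integrable (fun ε => G (v, ε)) := by
    intro v
    apply (((gauss_integrable v (by norm_num : (0:ℝ) < 2)).const_mul
      (v^2 * gden φ n σ θ₀ v))).congr
    filter_upwards with ε
    have : (-(ε-v)^2/2 : ℝ) = -(v-ε)^2/2 := by ring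
    rw [hGdef]
    simp only
    rw [this]; ring
  have hGnn : ∀ p : ℝ × ℝ, 0 ≤ G p := by
    intro p
    exact mul_nonneg (by positivity) (gden_nonneg hφ_nonneg hn hσ _)
  have hGval : ∀ v : ℝ, (∫ ε, G (v, ε)) = Real.sqrt (2*Real.pi) * (v^2 * gden φ n σ θ₀ v) := by
    intro v
    have heq : (fun ε => G (v, ε)) =
        fun ε => (v^2 * gden φ n σ θ₀ v) * Real.exp (-(ε-v)^2/2) := by
      funext ε
      have : (-(ε-v)^2/2 : ℝ) = -(v-ε)^2/2 := by ring
      rw [hGdef]; simp only; rw [this]; ring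
    rw [heq, integral_const_mul, gauss_value v (by norm_num : (0:ℝ) < 2)]
    ring
  have hG2 : Integrable (fun v => ∫ ε, ‖G (v, ε)‖) := by
    have heq2 : (fun v => ∫ ε, ‖G (v, ε)‖) =
        fun v => Real.sqrt (2*Real.pi) * (v^2 * gden φ n σ θ₀ v) := by
      funext v
      rw [← hGval v]
      congr 1; funext ε
      rw [Real.norm_eq_abs, abs_of_nonneg (hGnn _)]
    rw [heq2]
    exact hQint.const_mul _
  have hGint : Integrable G ((volume : Measure ℝ).prod volume) :=
    (integrable_prod_iff hGmeas).mpr ⟨Filter.Eventually.of_forall hG1, hG2⟩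
  constructor
  · exact hGint.integral_prod_right
  · have hswap := integral_integral_swap (f := fun v ε => G (v, ε)) hGint
    have hlhs : (∫ v : ℝ, ∫ ε : ℝ, G (v, ε)) =
        Real.sqrt (2*Real.pi) * ∫ v, v^2 * gden φ n σ θ₀ v := by
      rw [← integral_const_mul]
      congr 1; funext v
      exact hGval v
    have : (∫ ε : ℝ, ∫ v : ℝ, G (v, ε)) =
        Real.sqrt (2*Real.pi) * ∫ v, v^2 * gden φ n σ θ₀ v := by
      rw [← hswap, hlhs]
    rw [hGdef] at this
    simp only at this
    rw [this]
    have h2π : 0 ≤ Real.sqrt (2*Real.pi) := Real.sqrt_nonneg _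
    exact mul_le_mul_of_nonneg_left hQbd h2π

end Fubini

lemma gauss_conv (f : ℝ → ℝ) :
    (∫ ε, f ε ∂(gaussianReal 0 1)) =
      ∫ ε, ((Real.sqrt (2*Real.pi))⁻¹ * Real.exp (-ε^2/2)) * f ε := by
  rw [gaussianReal_of_var_ne_zero _ one_ne_zero]
  have hpdf : (gaussianPDF 0 1) = fun x => ((gaussianPDFReal 0 1 x).toNNReal : ENNReal) :=
    rfl
  rw [hpdf, integral_withDensity_eq_integral_smul
    ((measurable_gaussianPDFReal 0 1).real_toNNReal) f]
  congr 1; funext x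
  rw [NNReal.smul_def, smul_eq_mul, Real.coe_toNNReal _ (gaussianPDFReal_nonneg 0 1 x)]
  congr 1
  rw [gaussianPDFReal]
  push_cast
  norm_num

set_option maxHeartbeats 2000000 in
theorem second_moment_min_bound (φ : ℝ → ℝ) (cφ Cφ τ M : ℝ)
    (hφ_meas : Measurable φ) (hφ_nonneg : ∀ x, 0 ≤ φ x)
    (hφ_prob : (∫ x : ℝ, φ x) = 1)
    (hc : 0 < cφ) (hcC : cφ ≤ Cφ)
    (hub : ∀ x : ℝ, φ x ≤ Cφ)
    (hlb : ∀ x ∈ Set.Ioo (-τ) τ, cφ ≤ φ x)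
    (hmom : Integrable (fun x : ℝ => x ^ 2 * φ x))
    (hM : 0 < M) (hτ : M + 1 ≤ τ) :
    ∃ C : ℝ, ∀ n : ℕ, 1 ≤ n → ∀ σ : ℝ, 0 < σ →
      ∀ θ₀ : ℝ, |θ₀| ≤ M * σ →
        (∫ ε, Bpost φ n σ θ₀ ε ∂(gaussianReal 0 1)) ≤ C * min (σ ^ 2) (1 / n) := by
  classical
  have hCφpos : 0 < Cφ := lt_of_lt_of_le hc hcC
  set m₂ := ∫ x : ℝ, x^2*φ x with hm2def
  have hm2 : 0 ≤ m₂ := integral_nonneg fun x => mul_nonneg (sq_nonneg x) (hφ_nonneg x)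
  have hπ : (0:ℝ) < Real.pi := Real.pi_pos
  have hsqb : (0:ℝ) < Real.sqrt (2*Real.pi) := Real.sqrt_pos.mpr (by positivity)
  refine ⟨2*Real.exp (2⁻¹)*(m₂+M^2)/cφ
    + (Real.sqrt (2*Real.pi))⁻¹*(Cφ/cφ)*(4*Real.pi)*6*Real.exp (2⁻¹)
    + 6*(m₂+M^2)/cφ, ?_⟩
  intro n hn σ hσ θ₀ hθ
  have hnpos : (0:ℝ) < n := by exact_mod_cast hn
  have hs := s_pos hn hσ
  have hs2 : (Real.sqrt n * σ)^2 = n * σ^2 := by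
    rw [mul_pow, Real.sq_sqrt (Nat.cast_nonneg n)]
  obtain ⟨hNtint, hNtval⟩ := Ntilde_fubini hφ_meas hφ_nonneg hφ_prob hmom hub hn hσ hM hθ
  rw [← hm2def] at hNtval
  have hDpos : ∀ ε, 0 < Dint φ n σ θ₀ ε := fun ε =>
    Dint_pos hφ_meas hφ_nonneg hub hlb hc hτ hn hσ hθ ε
  have hNtnn : ∀ ε : ℝ, 0 ≤ ∫ v, v^2 * Real.exp (-(v-ε)^2/2) * gden φ n σ θ₀ v := fun ε =>
    Ntilde_nonneg hφ_nonneg hn hσ ε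
  have hBnn : ∀ ε, 0 ≤ Bpost φ n σ θ₀ ε := fun ε =>
    div_nonneg (Nint_nonneg hφ_nonneg hn hσ ε) (mul_nonneg hnpos.le (hDpos ε).le)
  have hkey : ∀ ε, ((Real.sqrt (2*Real.pi))⁻¹ * Real.exp (-ε^2/2)) * Bpost φ n σ θ₀ ε
      = (Real.sqrt (2*Real.pi))⁻¹ *
        ((∫ v, v^2 * Real.exp (-(v-ε)^2/2) * gden φ n σ θ₀ v) / (n * Dint φ n σ θ₀ ε)) := by
    intro ε
    rw [Bpost, Nint_eq]
    have h1 : Real.exp (-ε^2/2) * Real.exp (ε^2/2) = 1 := by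
      rw [← Real.exp_add, show (-ε^2/2 + ε^2/2 : ℝ) = 0 by ring, Real.exp_zero]
    calc ((Real.sqrt (2*Real.pi))⁻¹ * Real.exp (-ε^2/2)) *
        (Real.exp (ε^2/2) * (∫ v, v^2 * Real.exp (-(v-ε)^2/2) * gden φ n σ θ₀ v) /
          (n * Dint φ n σ θ₀ ε))
        = ((Real.sqrt (2*Real.pi))⁻¹ *
            ((∫ v, v^2 * Real.exp (-(v-ε)^2/2) * gden φ n σ θ₀ v) / (n * Dint φ n σ θ₀ ε))) *
          (Real.exp (-ε^2/2) * Real.exp (ε^2/2)) := by ring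
      _ = _ := by rw [h1, mul_one]
  have hfnn : ∀ ε, 0 ≤ ((Real.sqrt (2*Real.pi))⁻¹ * Real.exp (-ε^2/2)) * Bpost φ n σ θ₀ ε := by
    intro ε
    exact mul_nonneg (by positivity) (hBnn ε)
  rw [gauss_conv]
  rcases le_or_gt (Real.sqrt n * σ) 1 with hsle | hsgt
  · -- small bandwidth case : min = σ^2
    have hσn : σ^2 ≤ 1/(n:ℝ) := by
      rw [le_div_iff₀ hnpos]
      nlinarith [hs2, hs]
    have hmin : min (σ^2) (1/(n:ℝ)) = σ^2 := min_eq_left hσn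
    have hmaj : ∀ ε, ((Real.sqrt (2*Real.pi))⁻¹ * Real.exp (-ε^2/2)) * Bpost φ n σ θ₀ ε
        ≤ ((Real.sqrt (2*Real.pi))⁻¹ * Real.exp (2⁻¹)/(cφ*n)) *
          ∫ v, v^2 * Real.exp (-(v-ε)^2/2) * gden φ n σ θ₀ v := by
      intro ε
      rw [hkey ε]
      have hD := Dpos_small hφ_meas hφ_nonneg hub hlb hc hτ hn hσ hθ hsle ε
      have hd0 : (0:ℝ) < n * (Real.exp (-(1:ℝ)/2) * cφ) := by positivity
      have hd : (∫ v, v^2 * Real.exp (-(v-ε)^2/2) * gden φ n σ θ₀ v) / (n * Dint φ n σ θ₀ ε)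
          ≤ (∫ v, v^2 * Real.exp (-(v-ε)^2/2) * gden φ n σ θ₀ v) /
            (n * (Real.exp (-(1:ℝ)/2) * cφ)) :=
        div_le_div_of_nonneg_left (hNtnn ε) hd0 (by
          apply mul_le_mul_of_nonneg_left hD hnpos.le)
      calc (Real.sqrt (2*Real.pi))⁻¹ *
          ((∫ v, v^2 * Real.exp (-(v-ε)^2/2) * gden φ n σ θ₀ v) / (n * Dint φ n σ θ₀ ε))
          ≤ (Real.sqrt (2*Real.pi))⁻¹ *
            ((∫ v, v^2 * Real.exp (-(v-ε)^2/2) * gden φ n σ θ₀ v) /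
              (n * (Real.exp (-(1:ℝ)/2) * cφ))) := by
            exact mul_le_mul_of_nonneg_left hd (by positivity)
        _ = ((Real.sqrt (2*Real.pi))⁻¹ * Real.exp (2⁻¹)/(cφ*n)) *
            ∫ v, v^2 * Real.exp (-(v-ε)^2/2) * gden φ n σ θ₀ v := by
            have hh : Real.exp (-(1:ℝ)/2) = (Real.exp (2⁻¹))⁻¹ := by
              rw [← Real.exp_neg]
              norm_num
            rw [hh]
            have := Real.exp_pos (2⁻¹ : ℝ)
            field_simp
    calc (∫ ε, ((Real.sqrt (2*Real.pi))⁻¹ * Real.exp (-ε^2/2)) * Bpost φ n σ θ₀ ε)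
        ≤ ∫ ε, ((Real.sqrt (2*Real.pi))⁻¹ * Real.exp (2⁻¹)/(cφ*n)) *
            ∫ v, v^2 * Real.exp (-(v-ε)^2/2) * gden φ n σ θ₀ v := by
          exact integral_mono_of_nonneg (Filter.Eventually.of_forall hfnn)
            (hNtint.const_mul _) (Filter.Eventually.of_forall hmaj)
      _ = ((Real.sqrt (2*Real.pi))⁻¹ * Real.exp (2⁻¹)/(cφ*n)) *
          ∫ ε, ∫ v, v^2 * Real.exp (-(v-ε)^2/2) * gden φ n σ θ₀ v := integral_const_mul _ _
      _ ≤ ((Real.sqrt (2*Real.pi))⁻¹ * Real.exp (2⁻¹)/(cφ*n)) *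
          (Real.sqrt (2*Real.pi) * (2*(m₂+M^2)*((Real.sqrt n * σ)^2))) := by
          exact mul_le_mul_of_nonneg_left hNtval (by positivity)
      _ = (2*Real.exp (2⁻¹)*(m₂+M^2)/cφ) * σ^2 := by
          rw [hs2]
          field_simp
      _ ≤ _ := by
          rw [hmin]
          have hσ2 : (0:ℝ) ≤ σ^2 := sq_nonneg σ
          have c2 : 0 ≤ (Real.sqrt (2*Real.pi))⁻¹*(Cφ/cφ)*(4*Real.pi)*6*Real.exp (2⁻¹) := by
            positivity
          have c3 : 0 ≤ 6*(m₂+M^2)/cφ := by positivity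
          nlinarith
  · -- large bandwidth case : min = 1/n
    have hs1 : 1 ≤ Real.sqrt n * σ := hsgt.le
    have hσn : 1/(n:ℝ) ≤ σ^2 := by
      rw [div_le_iff₀ hnpos]
      nlinarith [hs2]
    have hmin : min (σ^2) (1/(n:ℝ)) = 1/(n:ℝ) := min_eq_right hσn
    set K₁ : ℝ := (Real.sqrt (2*Real.pi))⁻¹*(Cφ/cφ)*Real.sqrt (4*Real.pi)*Real.exp (2⁻¹)*6/(n:ℝ)
      with hK₁
    set K₂ : ℝ := (Real.sqrt (2*Real.pi))⁻¹ * (Real.sqrt n * σ) *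
      Real.exp ((1-(Real.sqrt n * σ)^2)/2)/(cφ*(n:ℝ)) with hK₂
    have hK₁nn : 0 ≤ K₁ := by rw [hK₁]; positivity
    have hK₂nn : 0 ≤ K₂ := by rw [hK₂]; positivity
    set A : Set ℝ := Set.Icc (-(Real.sqrt n * σ)) (Real.sqrt n * σ) with hA
    have hAmeas : MeasurableSet A := measurableSet_Icc
    set h₁ : ℝ → ℝ := fun ε => K₁ * Real.exp (-ε^2/4) with hh₁
    set h₂ : ℝ → ℝ := fun ε => K₂ * ∫ v, v^2 * Real.exp (-(v-ε)^2/2) * gden φ n σ θ₀ v with hh₂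
    have hint1 : Integrable h₁ := by
      apply ((gauss_integrable (0:ℝ) (by norm_num : (0:ℝ) < 4)).const_mul K₁).congr
      filter_upwards with ε
      rw [hh₁]
      simp only
      rw [sub_zero]
    have hint2 : Integrable h₂ := hNtint.const_mul K₂
    have hbound1 : ∀ ε ∈ A, ((Real.sqrt (2*Real.pi))⁻¹ * Real.exp (-ε^2/2)) *
        Bpost φ n σ θ₀ ε ≤ h₁ ε := by
      intro ε hε
      have hεs : |ε| ≤ Real.sqrt n * σ := by
        rw [abs_le]; exact Set.mem_Icc.mp hε
      rw [hkey ε]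
      have hD := Dpos_inner hφ_meas hφ_nonneg hub hlb hc hτ hn hσ hθ hs1 hεs
      have hd₀pos : (0:ℝ) < Real.exp ((ε^2-1)/2) * (cφ * (Real.sqrt n * σ)⁻¹) := by positivity
      have hstep1 : (∫ v, v^2 * Real.exp (-(v-ε)^2/2) * gden φ n σ θ₀ v) /
          (n * Dint φ n σ θ₀ ε) ≤
          (∫ v, v^2 * Real.exp (-(v-ε)^2/2) * gden φ n σ θ₀ v) /
          (n * (Real.exp ((ε^2-1)/2) * (cφ * (Real.sqrt n * σ)⁻¹))) :=
        div_le_div_of_nonneg_left (hNtnn ε) (by positivity)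
          (mul_le_mul_of_nonneg_left hD hnpos.le)
      have hexp1 : Real.exp ((ε^2-1)/2) * (Real.exp (2⁻¹) * Real.exp (-ε^2/2)) = 1 := by
        rw [← Real.exp_add, ← Real.exp_add,
          show ((ε^2-1)/2 + (2⁻¹ + -ε^2/2) : ℝ) = 0 by ring, Real.exp_zero]
      have heq : ((n:ℝ) * (Real.exp ((ε^2-1)/2) * (cφ * (Real.sqrt n * σ)⁻¹))) *
          ((Cφ/cφ)*Real.sqrt (4*Real.pi)*Real.exp (2⁻¹)/(n:ℝ)*((4+2*ε^2)*Real.exp (-ε^2/2)))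
          = (Real.sqrt n * σ)⁻¹ * Cφ * ((4+2*ε^2)*Real.sqrt (4*Real.pi)) *
            (Real.exp ((ε^2-1)/2) * (Real.exp (2⁻¹) * Real.exp (-ε^2/2))) := by
        field_simp
      have hstep2 : (∫ v, v^2 * Real.exp (-(v-ε)^2/2) * gden φ n σ θ₀ v) /
          (n * (Real.exp ((ε^2-1)/2) * (cφ * (Real.sqrt n * σ)⁻¹)))
          ≤ (Cφ/cφ)*Real.sqrt (4*Real.pi)*Real.exp (2⁻¹)/(n:ℝ)*((4+2*ε^2)*Real.exp (-ε^2/2)) := by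
        rw [div_le_iff₀ (by positivity)]
        calc (∫ v, v^2 * Real.exp (-(v-ε)^2/2) * gden φ n σ θ₀ v)
            ≤ (Real.sqrt n*σ)⁻¹ * Cφ * ((4+2*ε^2) * Real.sqrt (4*Real.pi)) :=
              Ntilde_ub hφ_meas hφ_nonneg hub hn hσ ε
          _ = (Cφ/cφ)*Real.sqrt (4*Real.pi)*Real.exp (2⁻¹)/(n:ℝ)*((4+2*ε^2)*Real.exp (-ε^2/2)) *
              ((n:ℝ) * (Real.exp ((ε^2-1)/2) * (cφ * (Real.sqrt n * σ)⁻¹))) := by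
              rw [mul_comm ((Cφ/cφ)*Real.sqrt (4*Real.pi)*Real.exp (2⁻¹)/(n:ℝ)*((4+2*ε^2)*Real.exp (-ε^2/2)))]
              rw [heq, hexp1, mul_one]
      calc (Real.sqrt (2*Real.pi))⁻¹ *
          ((∫ v, v^2 * Real.exp (-(v-ε)^2/2) * gden φ n σ θ₀ v) / (n * Dint φ n σ θ₀ ε))
          ≤ (Real.sqrt (2*Real.pi))⁻¹ *
            ((Cφ/cφ)*Real.sqrt (4*Real.pi)*Real.exp (2⁻¹)/(n:ℝ)*((4+2*ε^2)*Real.exp (-ε^2/2))) := by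
            exact mul_le_mul_of_nonneg_left (le_trans hstep1 hstep2) (by positivity)
        _ ≤ (Real.sqrt (2*Real.pi))⁻¹ *
            ((Cφ/cφ)*Real.sqrt (4*Real.pi)*Real.exp (2⁻¹)/(n:ℝ)*(6*Real.exp (-ε^2/4))) := by
            apply mul_le_mul_of_nonneg_left _ (by positivity)
            exact mul_le_mul_of_nonneg_left (aux_ptB ε) (by positivity)
        _ = h₁ ε := by rw [hh₁, hK₁]; ring
    have hbound2 : ∀ ε ∉ A, ((Real.sqrt (2*Real.pi))⁻¹ * Real.exp (-ε^2/2)) *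
        Bpost φ n σ θ₀ ε ≤ h₂ ε := by
      intro ε hε
      have hεs : Real.sqrt n * σ ≤ |ε| := by
        by_contra hcon
        push_neg at hcon
        exact hε (by rw [hA, Set.mem_Icc]; exact ⟨(abs_lt.mp hcon).1.le, (abs_lt.mp hcon).2.le⟩)
      rw [hkey ε]
      have hD := Dpos_outer hφ_meas hφ_nonneg hub hlb hc hτ hn hσ hθ hs1 hεs
      have hd₁pos : (0:ℝ) < Real.exp (ε^2/2 - (|ε| - Real.sqrt n * σ + 1)^2/2) *
          (cφ * (Real.sqrt n * σ)⁻¹) := by positivity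
      have hstep1 : (∫ v, v^2 * Real.exp (-(v-ε)^2/2) * gden φ n σ θ₀ v) /
          (n * Dint φ n σ θ₀ ε) ≤
          (∫ v, v^2 * Real.exp (-(v-ε)^2/2) * gden φ n σ θ₀ v) /
          (n * (Real.exp (ε^2/2 - (|ε| - Real.sqrt n * σ + 1)^2/2) *
            (cφ * (Real.sqrt n * σ)⁻¹))) :=
        div_le_div_of_nonneg_left (hNtnn ε) (by positivity)
          (mul_le_mul_of_nonneg_left hD hnpos.le)
      have hinv : Real.exp (ε^2/2 - (|ε| - Real.sqrt n * σ + 1)^2/2) *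
          Real.exp ((|ε| - Real.sqrt n * σ + 1)^2/2 - ε^2/2) = 1 := by
        rw [← Real.exp_add,
          show (ε^2/2 - (|ε| - Real.sqrt n * σ + 1)^2/2 +
            ((|ε| - Real.sqrt n * σ + 1)^2/2 - ε^2/2) : ℝ) = 0 by ring, Real.exp_zero]
      have heq2 : (∫ v, v^2 * Real.exp (-(v-ε)^2/2) * gden φ n σ θ₀ v) /
          (n * (Real.exp (ε^2/2 - (|ε| - Real.sqrt n * σ + 1)^2/2) *
            (cφ * (Real.sqrt n * σ)⁻¹)))
          = ((Real.sqrt n * σ) * Real.exp ((|ε| - Real.sqrt n * σ + 1)^2/2 - ε^2/2)/(cφ*(n:ℝ))) *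
            ∫ v, v^2 * Real.exp (-(v-ε)^2/2) * gden φ n σ θ₀ v := by
        rw [div_eq_iff (by positivity : (n:ℝ) * (Real.exp (ε^2/2 - (|ε| - Real.sqrt n * σ + 1)^2/2) * (cφ * (Real.sqrt n * σ)⁻¹)) ≠ 0)]
        have expand : ((Real.sqrt n * σ) * Real.exp ((|ε| - Real.sqrt n * σ + 1)^2/2 - ε^2/2)/(cφ*(n:ℝ)) *
            (∫ v, v^2 * Real.exp (-(v-ε)^2/2) * gden φ n σ θ₀ v)) *
            ((n:ℝ) * (Real.exp (ε^2/2 - (|ε| - Real.sqrt n * σ + 1)^2/2) * (cφ * (Real.sqrt n * σ)⁻¹)))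
            = (∫ v, v^2 * Real.exp (-(v-ε)^2/2) * gden φ n σ θ₀ v) *
              (Real.exp (ε^2/2 - (|ε| - Real.sqrt n * σ + 1)^2/2) *
                Real.exp ((|ε| - Real.sqrt n * σ + 1)^2/2 - ε^2/2)) := by
          field_simp
        rw [expand, hinv, mul_one]
      have hexp2 : Real.exp ((|ε| - Real.sqrt n * σ + 1)^2/2 - ε^2/2) ≤
          Real.exp ((1-(Real.sqrt n * σ)^2)/2) := by
        apply Real.exp_le_exp.mpr
        nlinarith [sq_abs ε, mul_nonneg (sub_nonneg.mpr hs1) (sub_nonneg.mpr hεs)]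
      calc (Real.sqrt (2*Real.pi))⁻¹ *
          ((∫ v, v^2 * Real.exp (-(v-ε)^2/2) * gden φ n σ θ₀ v) / (n * Dint φ n σ θ₀ ε))
          ≤ (Real.sqrt (2*Real.pi))⁻¹ *
            (((Real.sqrt n * σ) * Real.exp ((|ε| - Real.sqrt n * σ + 1)^2/2 - ε^2/2)/(cφ*(n:ℝ))) *
              ∫ v, v^2 * Real.exp (-(v-ε)^2/2) * gden φ n σ θ₀ v) := by
            rw [← heq2]
            exact mul_le_mul_of_nonneg_left hstep1 (by positivity)
        _ ≤ (Real.sqrt (2*Real.pi))⁻¹ *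
            (((Real.sqrt n * σ) * Real.exp ((1-(Real.sqrt n * σ)^2)/2)/(cφ*(n:ℝ))) *
              ∫ v, v^2 * Real.exp (-(v-ε)^2/2) * gden φ n σ θ₀ v) := by
            apply mul_le_mul_of_nonneg_left _ (by positivity)
            apply mul_le_mul_of_nonneg_right _ (hNtnn ε)
            apply div_le_div_of_nonneg_right ?_ (by positivity)
            case _ => exact mul_le_mul_of_nonneg_left hexp2 (by positivity)
        _ = h₂ ε := by rw [hh₂, hK₂]; simp only; ring
    have hpw : ∀ ε, ((Real.sqrt (2*Real.pi))⁻¹ * Real.exp (-ε^2/2)) * Bpost φ n σ θ₀ ε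
        ≤ A.piecewise h₁ h₂ ε := by
      intro ε
      by_cases hε : ε ∈ A
      · rw [Set.piecewise_eq_of_mem _ _ _ hε]; exact hbound1 ε hε
      · rw [Set.piecewise_eq_of_notMem _ _ _ hε]; exact hbound2 ε hε
    have hpint : Integrable (A.piecewise h₁ h₂) :=
      Integrable.piecewise hAmeas hint1.integrableOn hint2.integrableOn
    have hval1 : (∫ ε, h₁ ε) = K₁ * Real.sqrt (4*Real.pi) := by
      rw [hh₁]
      simp only
      rw [integral_const_mul]
      congr 1
      rw [← gauss_value (0:ℝ) (by norm_num : (0:ℝ) < 4)]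
      congr 1
      funext ε
      rw [sub_zero]
    have hval2 : (∫ ε, h₂ ε) ≤ K₂ * (Real.sqrt (2*Real.pi) *
        (2*(m₂+M^2)*((Real.sqrt n * σ)^2))) := by
      rw [hh₂]
      simp only
      rw [integral_const_mul]
      exact mul_le_mul_of_nonneg_left hNtval hK₂nn
    have hres1 : K₁ * Real.sqrt (4*Real.pi) =
        ((Real.sqrt (2*Real.pi))⁻¹*(Cφ/cφ)*(4*Real.pi)*6*Real.exp (2⁻¹)) * (1/(n:ℝ)) := by
      rw [hK₁]
      have h4π : Real.sqrt (4*Real.pi) * Real.sqrt (4*Real.pi) = 4*Real.pi :=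
        Real.mul_self_sqrt (by positivity)
      have hstep : (Real.sqrt (2*Real.pi))⁻¹*(Cφ/cφ)*Real.sqrt (4*Real.pi)*Real.exp (2⁻¹)*6/(n:ℝ)
          * Real.sqrt (4*Real.pi)
          = (Real.sqrt (2*Real.pi))⁻¹*(Cφ/cφ)*Real.exp (2⁻¹)*6/(n:ℝ) *
            (Real.sqrt (4*Real.pi) * Real.sqrt (4*Real.pi)) := by ring
      rw [hstep, h4π]
      ring
    have hres2 : K₂ * (Real.sqrt (2*Real.pi) * (2*(m₂+M^2)*((Real.sqrt n * σ)^2)))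
        ≤ (6*(m₂+M^2)/cφ) * (1/(n:ℝ)) := by
      have hrw : K₂ * (Real.sqrt (2*Real.pi) * (2*(m₂+M^2)*((Real.sqrt n * σ)^2)))
          = (2*(m₂+M^2)/cφ) * ((Real.sqrt n * σ)^3 *
            Real.exp ((1-(Real.sqrt n * σ)^2)/2)) * (1/(n:ℝ)) := by
        rw [hK₂]
        field_simp
      rw [hrw]
      have hC := aux_ptC hs1
      have : (2*(m₂+M^2)/cφ) * ((Real.sqrt n * σ)^3 *
          Real.exp ((1-(Real.sqrt n * σ)^2)/2)) ≤ (2*(m₂+M^2)/cφ) * 3 :=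
        mul_le_mul_of_nonneg_left hC (by positivity)
      calc (2*(m₂+M^2)/cφ) * ((Real.sqrt n * σ)^3 *
          Real.exp ((1-(Real.sqrt n * σ)^2)/2)) * (1/(n:ℝ))
          ≤ ((2*(m₂+M^2)/cφ) * 3) * (1/(n:ℝ)) :=
            mul_le_mul_of_nonneg_right this (by positivity)
        _ = (6*(m₂+M^2)/cφ) * (1/(n:ℝ)) := by ring
    calc (∫ ε, ((Real.sqrt (2*Real.pi))⁻¹ * Real.exp (-ε^2/2)) * Bpost φ n σ θ₀ ε)
        ≤ ∫ ε, A.piecewise h₁ h₂ ε :=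
          integral_mono_of_nonneg (Filter.Eventually.of_forall hfnn) hpint
            (Filter.Eventually.of_forall hpw)
      _ = (∫ ε in A, h₁ ε) + ∫ ε in Aᶜ, h₂ ε :=
          integral_piecewise hAmeas hint1.integrableOn hint2.integrableOn
      _ ≤ (∫ ε, h₁ ε) + ∫ ε, h₂ ε := by
          apply add_le_add
          · apply setIntegral_le_integral hint1
            filter_upwards with ε
            rw [hh₁]
            positivity
          · apply setIntegral_le_integral hint2
            filter_upwards with ε
            rw [hh₂]
            simp only
            exact mul_nonneg hK₂nn (hNtnn ε)
      _ ≤ ((Real.sqrt (2*Real.pi))⁻¹*(Cφ/cφ)*(4*Real.pi)*6*Real.exp (2⁻¹)) * (1/(n:ℝ))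
          + (6*(m₂+M^2)/cφ) * (1/(n:ℝ)) := by
          rw [hval1]
          exact add_le_add hres1.le (le_trans hval2 hres2)
      _ ≤ _ := by
          rw [hmin]
          have c1 : 0 ≤ 2*Real.exp (2⁻¹)*(m₂+M^2)/cφ := by positivity
          have hn1 : 0 ≤ 1/(n:ℝ) := by positivity
          nlinarith
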